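/- Let R = ℚ[q^{±1}, t^{±1}] and let {m}_i := R/(φ_m(q), q^i t + 1) for m > 1, i ≥ 0. Then {m}_i and {m'}_{i'} are isomorphic as ℚ[t^{±1}]-modules if and only if φ(m) = φ(m') (Euler totient) and m/gcd(m,i) = m'/gcd(m',i'). -/

import Mathlib

open Polynomial

/-- The ring `R = ℚ[q^{±1}, t^{±1}]`, modelled as Laurent polynomials in `q` with
coefficients in `ℚ[t^{±1}]`, so that `R` is naturally an algebra (hence a module) over
`ℚ[t^{±1}]` via the inclusion. -/
noncomputable abbrev LaurentTQ : Type := LaurentPolynomial (LaurentPolynomial ℚ)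

/-- The variable `q` (the outer Laurent variable). -/
noncomputable def qv : LaurentTQ := LaurentPolynomial.T 1

/-- The variable `t` (the coefficient Laurent variable). -/
noncomputable def tv : LaurentTQ := LaurentPolynomial.C (LaurentPolynomial.T 1)

/-- The module `{m}_i = R/(φ_m(q), q^i t + 1)`. -/
noncomputable def qtMod (m i : ℕ) : Type :=
  LaurentTQ ⧸ Ideal.span {(aeval qv (cyclotomic m ℚ) : LaurentTQ), qv ^ i * tv + 1}

noncomputable instance (m i : ℕ) : AddCommGroup (qtMod m i) :=
  inferInstanceAs (AddCommGroup (LaurentTQ ⧸ Ideal.span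
    {(aeval qv (cyclotomic m ℚ) : LaurentTQ), qv ^ i * tv + 1}))

noncomputable instance (m i : ℕ) : Module (LaurentPolynomial ℚ) (qtMod m i) :=
  inferInstanceAs (Module (LaurentPolynomial ℚ) (LaurentTQ ⧸ Ideal.span
    {(aeval qv (cyclotomic m ℚ) : LaurentTQ), qv ^ i * tv + 1}))


open LaurentPolynomial AddMonoidAlgebra
set_option maxHeartbeats 1000000
set_option synthInstance.maxHeartbeats 400000
noncomputable section

/-- order of `-x` as function of order of `x` (in a char-zero field). -/
def negOrd (d : ℕ) : ℕ := if d % 2 = 1 then 2 * d else if d % 4 = 2 then d / 2 else d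

lemma negOrd_pos {d : ℕ} (hd : 0 < d) : 0 < negOrd d := by unfold negOrd; split_ifs <;> omega

lemma negOrd_inj {d d' : ℕ} (hd : 0 < d) (hd' : 0 < d') (h : negOrd d = negOrd d') :
    d = d' := by
  unfold negOrd at h; split_ifs at h <;> omega

lemma gcd_two_mul_succ (e : ℕ) : Nat.gcd (2 * e) (e + 1) = if e % 2 = 0 then 1 else 2 := by
  have h2 : Nat.gcd (2 * e) (e + 1) ∣ 2 := by
    have h1 : Nat.gcd (2 * e) (e + 1) ∣ 2 * (e + 1) - 2 * e :=
      Nat.dvd_sub (Dvd.dvd.mul_left (Nat.gcd_dvd_right _ _) 2) (Nat.gcd_dvd_left _ _)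
    have : 2 * (e + 1) - 2 * e = 2 := by omega
    rwa [this] at h1
  rcases (Nat.dvd_prime Nat.prime_two).1 h2 with h | h
  · rw [h]
    have he : e % 2 = 1 → 2 ∣ Nat.gcd (2 * e) (e + 1) :=
      fun hp => Nat.dvd_gcd ⟨e, rfl⟩ (by omega)
    split_ifs with hh
    · rfl
    · exfalso; have := he (by omega); omega
  · rw [h]
    have h2d : 2 ∣ e + 1 := h ▸ Nat.gcd_dvd_right _ _
    obtain ⟨c, hc⟩ := h2d
    split_ifs with hh
    · exfalso; omega
    · rfl

lemma orderOf_neg_unit {F : Type*} [Field F] [CharZero F] (x : Fˣ) (hx : orderOf x ≠ 0) :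
    orderOf (-x) = negOrd (orderOf x) := by
  have hfin : IsOfFinOrder x := by
    rw [← orderOf_pos_iff]; omega
  have hneg1 : orderOf (-1 : Fˣ) = 2 := by
    rw [← orderOf_units]
    simp only [Units.val_neg, Units.val_one]
    rw [orderOf_neg_one]
    have : ringChar F = 0 := ringChar.eq_zero
    simp [this]
  set d := orderOf x with hd
  rcases Nat.even_or_odd d with hev | hodd
  · -- d even
    obtain ⟨e, he⟩ := hev
    have hepos : 0 < e := by omega
    have hxe : x ^ e = -1 := by
      have hsq : (x ^ e) ^ 2 = 1 := by
        rw [← pow_mul]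
        have : e * 2 = d := by omega
        rw [this, pow_orderOf_eq_one]
      have hne : x ^ e ≠ 1 := by
        intro hh
        have := Nat.le_of_dvd hepos (orderOf_dvd_iff_pow_eq_one.2 hh)
        omega
      have hsqF : ((x : F) ^ e) ^ 2 = 1 := by
        have := congrArg (Units.val) hsq
        simpa using this
      rcases sq_eq_one_iff.1 hsqF with h1 | h1
      · exact absurd (Units.ext (by simpa using h1)) hne
      · exact Units.ext (by simpa using h1)
    have hneg : -x = x ^ (e + 1) := by
      rw [pow_succ, hxe, neg_one_mul]
    rw [hneg, hfin.orderOf_pow, ← hd]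
    have : d.gcd (e+1) = Nat.gcd (2*e) (e+1) := by rw [he]; ring_nf
    rw [this, gcd_two_mul_succ]
    unfold negOrd
    split_ifs <;> omega
  · have hcop : Nat.Coprime 2 d := Nat.coprime_two_left.2 hodd
    have hh : -x = -1 * x := by rw [neg_one_mul]
    rw [hh, (Commute.all _ _).orderOf_mul_eq_mul_orderOf_of_coprime (by rw [hneg1, ← hd]; exact hcop)]
    rw [hneg1, negOrd, ← hd]
    have : d % 2 = 1 := Nat.odd_iff.mp hodd
    simp [this]


abbrev Rt : Type := LaurentPolynomial ℚ
abbrev Km (m : ℕ) : Type := AdjoinRoot (Polynomial.cyclotomic m ℚ)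

def Jid (m i : ℕ) : Ideal LaurentTQ :=
  Ideal.span {(aeval qv (cyclotomic m ℚ) : LaurentTQ), qv ^ i * tv + 1}

/-- Evaluation of `ℚ[t^{±1}]` at a unit of a `ℚ`-algebra. -/
def evT {S : Type*} [CommRing S] [Algebra ℚ S] (u : Sˣ) : Rt →+* S :=
  ((AddMonoidAlgebra.lift ℚ S ℤ) ((Units.coeHom S).comp (zpowersHom Sˣ u))).toRingHom

@[simp] lemma evT_T {S : Type*} [CommRing S] [Algebra ℚ S] (u : Sˣ) (n : ℤ) :
    evT u (LaurentPolynomial.T n) = ((u ^ n : Sˣ) : S) := by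
  show (AddMonoidAlgebra.lift ℚ S ℤ) _ (AddMonoidAlgebra.single n (1:ℚ)) = _
  rw [AddMonoidAlgebra.lift_single, one_smul]
  rfl

/-- Evaluation of `ℚ[q^{±1},t^{±1}]` at a pair of units. -/
def evQT {S : Type*} [CommRing S] [Algebra ℚ S] (uq ut : Sˣ) : LaurentTQ →+* S :=
  AddMonoidAlgebra.liftNCRingHom (evT ut) ((Units.coeHom S).comp (zpowersHom Sˣ uq))
    (fun _ _ => Commute.all _ _)

variable {S : Type*} [CommRing S] [Algebra ℚ S] (uq ut : Sˣ)

lemma evQT_single (n : ℤ) (p : Rt) :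
    evQT uq ut (AddMonoidAlgebra.single n p) = evT ut p * ((uq ^ n : Sˣ) : S) := by
  show AddMonoidAlgebra.liftNC _ _ (AddMonoidAlgebra.single n p) = _
  rw [AddMonoidAlgebra.liftNC_single]
  rfl

@[simp] lemma evQT_qv : evQT uq ut qv = uq := by
  have : qv = AddMonoidAlgebra.single (1:ℤ) (1:Rt) := rfl
  rw [this, evQT_single, map_one, one_mul, zpow_one]

@[simp] lemma evQT_C (p : Rt) : evQT uq ut (LaurentPolynomial.C p) = evT ut p := by
  have : (LaurentPolynomial.C p : LaurentTQ) = AddMonoidAlgebra.single (0:ℤ) p := rfl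
  rw [this, evQT_single, zpow_zero, Units.val_one, mul_one]

@[simp] lemma evQT_tv : evQT uq ut tv = ut := by
  have : tv = LaurentPolynomial.C (LaurentPolynomial.T 1) := rfl
  rw [this, evQT_C, evT_T, zpow_one]

lemma smul_mk (J : Ideal LaurentTQ) (p : Rt) (y : LaurentTQ) :
    p • (Ideal.Quotient.mk J y) = Ideal.Quotient.mk J (LaurentPolynomial.C p * y) := by
  have h : p • y = LaurentPolynomial.C p * y := by
    rw [LaurentPolynomial.C_eq_algebraMap, ← Algebra.smul_def]
  rw [← h]
  exact (Submodule.Quotient.mk_smul J p y).symm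

lemma mul_inv_unique {S : Type*} [CommMonoid S] {a b v : S} (ha : a * v = 1) (hb : b * v = 1) :
    a = b := by
  calc a = a * (b * v) := by rw [hb, mul_one]
  _ = b * (a * v) := by rw [mul_left_comm]
  _ = b := by rw [ha, mul_one]

lemma laurentHom_ext {R S : Type*} [CommSemiring R] [CommSemiring S]
    {f g : LaurentPolynomial R →+* S}
    (hC : ∀ r, f (LaurentPolynomial.C r) = g (LaurentPolynomial.C r))
    (hT : f (LaurentPolynomial.T 1) = g (LaurentPolynomial.T 1)) : f = g := by
  have h1 : (LaurentPolynomial.T 1 : LaurentPolynomial R) * LaurentPolynomial.T (-1) = 1 := by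
    rw [← LaurentPolynomial.T_add]
    norm_num
  have hTneg : f (LaurentPolynomial.T (-1)) = g (LaurentPolynomial.T (-1)) := by
    refine mul_inv_unique (v := f (LaurentPolynomial.T 1)) ?_ ?_
    · rw [mul_comm, ← map_mul, h1, map_one]
    · rw [hT, mul_comm, ← map_mul, h1, map_one]
  have hTn : ∀ n : ℤ, f (LaurentPolynomial.T n) = g (LaurentPolynomial.T n) := by
    intro n
    induction n using Int.induction_on with
    | zero => rw [LaurentPolynomial.T_zero, map_one, map_one]
    | succ k ih =>
        have : (LaurentPolynomial.T (k+1) : LaurentPolynomial R)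
            = LaurentPolynomial.T k * LaurentPolynomial.T 1 := by
          rw [← LaurentPolynomial.T_add]
        rw [this, map_mul, map_mul, ih, hT]
    | pred k ih =>
        have : (LaurentPolynomial.T (-k-1) : LaurentPolynomial R)
            = LaurentPolynomial.T (-k) * LaurentPolynomial.T (-1) := by
          rw [← LaurentPolynomial.T_add]; ring_nf
        rw [this, map_mul, map_mul, ih, hTneg]
  apply AddMonoidAlgebra.ringHom_ext
  · intro b; exact hC b
  · intro a; exact hTn a

lemma ratHom_C_ext {S : Type*} [CommRing S] (F G : Rt →+* S)
    (hT : F (LaurentPolynomial.T 1) = G (LaurentPolynomial.T 1)) : F = G :=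
  laurentHom_ext (fun r => RingHom.congr_fun (Subsingleton.elim
    (F.comp LaurentPolynomial.C) (G.comp LaurentPolynomial.C)) r) hT

lemma qtMain (m i : ℕ) (hm : 0 < m) :
    ∃ (α : (Km m)ˣ) (E : (LaurentTQ ⧸ Jid m i) ≃+* Km m),
      orderOf ((α : (Km m)ˣ) : Km m) = negOrd (m / Nat.gcd m i) ∧
      (∀ (p : Rt) (x : LaurentTQ ⧸ Jid m i), E (p • x) = evT α p * E x) := by
  haveI : Fact (Irreducible (cyclotomic m ℚ)) := ⟨cyclotomic.irreducible_rat hm⟩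
  haveI : CharZero (Km m) := charZero_of_injective_algebraMap (algebraMap ℚ (Km m)).injective
  haveI : NeZero ((m : ℕ) : Km m) := ⟨Nat.cast_ne_zero.mpr hm.ne'⟩
  set ζ : Km m := AdjoinRoot.root _ with hζdef
  have hroot : aeval ζ (cyclotomic m ℚ) = 0 := by
    rw [hζdef, aeval_def, Subsingleton.elim (algebraMap ℚ (Km m)) (AdjoinRoot.of _), AdjoinRoot.eval₂_root]
  have hζ : IsPrimitiveRoot ζ m := by
    rw [← Polynomial.isRoot_cyclotomic_iff (R := Km m)]
    rw [Polynomial.IsRoot.def, ← Polynomial.map_cyclotomic m (algebraMap ℚ (Km m)),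
      Polynomial.eval_map, ← Polynomial.aeval_def]
    exact hroot
  have hζustar : IsUnit ζ := IsUnit.of_pow_eq_one hζ.pow_eq_one hm.ne'
  set ζu : (Km m)ˣ := hζustar.unit with hζu_def
  have hζuv : (ζu : Km m) = ζ := rfl
  set α : (Km m)ˣ := -(ζu ^ (-(i : ℤ))) with hα
  set J : Ideal LaurentTQ := Jid m i with hJ
  set evK : LaurentTQ →+* Km m := evQT ζu α with hevK
  -- the ideal is contained in the kernel
  have hunit_prod : ((ζu ^ (i:ℤ) * ζu ^ (-(i:ℤ)) : (Km m)ˣ) : Km m) = 1 := by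
    rw [← zpow_add, add_neg_cancel, zpow_zero, Units.val_one]
  have hker : ∀ a ∈ J, evK a = 0 := by
    intro a ha
    rw [hJ, Jid] at ha
    refine Submodule.span_induction ?_ ?_ (fun x y _ _ hx hy => by rw [map_add, hx, hy, add_zero])
      (fun c x _ hx => by rw [smul_eq_mul, map_mul, hx, mul_zero]) ha
    · rintro x hx
      rcases hx with rfl | rfl
      · have h1 : evK (aeval qv (cyclotomic m ℚ)) = aeval ((evK : LaurentTQ →+* Km m).toRatAlgHom qv) (cyclotomic m ℚ) :=
          (Polynomial.aeval_algHom_apply (evK : LaurentTQ →+* Km m).toRatAlgHom qv (cyclotomic m ℚ)).symm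
        rw [h1]
        have h2 : (evK : LaurentTQ →+* Km m).toRatAlgHom qv = ζ := by
          show evK qv = ζ
          rw [hevK, evQT_qv, hζuv]
        rw [h2, hroot]
      · rw [map_add, map_mul, map_pow, map_one, hevK, evQT_qv, evQT_tv]
        have h3 : (ζu : Km m) ^ i = ((ζu ^ (i:ℤ) : (Km m)ˣ) : Km m) := by
          norm_cast
        rw [h3, hα, Units.val_neg, mul_neg, ← Units.val_mul, ← zpow_add, add_neg_cancel,
          zpow_zero, Units.val_one]
        ring
    · exact map_zero evK
  set evbar : (LaurentTQ ⧸ J) →+* Km m := Ideal.Quotient.lift J evK hker with hevbar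
  have hmkqv : aeval (Ideal.Quotient.mk J qv) (cyclotomic m ℚ) = 0 := by
    have h1 : aeval (Ideal.Quotient.mk J qv) (cyclotomic m ℚ)
        = Ideal.Quotient.mkₐ ℚ J (aeval qv (cyclotomic m ℚ)) :=
      (Polynomial.aeval_algHom_apply (Ideal.Quotient.mkₐ ℚ J) qv (cyclotomic m ℚ))
    rw [h1]
    show Ideal.Quotient.mk J _ = 0
    rw [Ideal.Quotient.eq_zero_iff_mem, hJ, Jid]
    exact Ideal.subset_span (Set.mem_insert _ _)
  set backK : Km m →ₐ[ℚ] (LaurentTQ ⧸ J) :=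
    AdjoinRoot.liftAlgHom (cyclotomic m ℚ) (Algebra.ofId ℚ _) (Ideal.Quotient.mk J qv) (by rw [aeval_def] at hmkqv; exact hmkqv) with hbackK
  have hbackroot : backK ζ = Ideal.Quotient.mk J qv := by
    rw [hζdef, hbackK]
    exact AdjoinRoot.liftAlgHom_root _ _ _ _
  -- backK ∘ evK = mk
  have htv : backK (evK tv) = Ideal.Quotient.mk J tv := by
    have he1 : evK tv = ((α : (Km m)ˣ) : Km m) := by rw [hevK, evQT_tv]
    rw [he1, hα, Units.val_neg, map_neg]
    have hz : (ζu ^ (-(i:ℤ))) = (ζu⁻¹) ^ i := by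
      rw [zpow_neg, ← inv_zpow, zpow_natCast]
    rw [hz]
    have hcast : ((ζu⁻¹ ^ i : (Km m)ˣ) : Km m) = ((ζu⁻¹ : (Km m)ˣ) : Km m) ^ i :=
      Units.val_pow_eq_pow_val _ _
    rw [hcast, map_pow]
    have hbinv : backK ((ζu⁻¹ : (Km m)ˣ) : Km m)
        = Ideal.Quotient.mk J (LaurentPolynomial.T (-1)) := by
      have h1 : backK ((ζu⁻¹ : (Km m)ˣ) : Km m) * backK ζ = 1 := by
        rw [← map_mul, ← hζuv, ← Units.val_mul, inv_mul_cancel, Units.val_one, map_one]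
      have h2 : Ideal.Quotient.mk J (LaurentPolynomial.T (-1)) * backK ζ = 1 := by
        rw [hbackroot]
        show _ * Ideal.Quotient.mk J (LaurentPolynomial.T 1) = 1
        rw [← map_mul, ← LaurentPolynomial.T_add]
        norm_num
      exact mul_inv_unique h1 h2
    rw [hbinv, ← map_pow]
    have hTpow : (LaurentPolynomial.T (-1) : LaurentTQ) ^ i = LaurentPolynomial.T (-(i:ℤ)) := by
      rw [LaurentPolynomial.T_pow]; ring_nf
    rw [hTpow]
    have hqvpow : (qv : LaurentTQ) ^ i = LaurentPolynomial.T (i:ℤ) := by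
      rw [qv, LaurentPolynomial.T_pow]; ring_nf
    have hmem : Ideal.Quotient.mk J (tv + LaurentPolynomial.T (-(i:ℤ))) = 0 := by
      rw [Ideal.Quotient.eq_zero_iff_mem]
      have hfact2 : tv + LaurentPolynomial.T (-(i:ℤ))
          = LaurentPolynomial.T (-(i:ℤ)) * (qv ^ i * tv + 1) := by
        rw [mul_add, mul_one, ← mul_assoc, hqvpow, ← LaurentPolynomial.T_add]
        norm_num [LaurentPolynomial.T_zero, add_comm]
      rw [hfact2, hJ, Jid]
      exact Ideal.mul_mem_left _ _ (Ideal.subset_span (Set.mem_insert_of_mem _ rfl))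
    rw [map_add] at hmem
    linear_combination -hmem
  have hBE : backK.toRingHom.comp evK = (Ideal.Quotient.mk J : LaurentTQ →+* _) := by
    refine laurentHom_ext (R := Rt) (S := LaurentTQ ⧸ J) ?_ ?_
    · intro p
      refine RingHom.congr_fun (ratHom_C_ext (S := LaurentTQ ⧸ J)
        ((backK.toRingHom.comp evK).comp (LaurentPolynomial.C (R := Rt)))
        (by exact (Ideal.Quotient.mk J : LaurentTQ →+* _).comp (LaurentPolynomial.C (R := Rt))) ?_) p
      show backK (evK tv) = Ideal.Quotient.mk J tv
      exact htv
    · show backK (evK qv) = Ideal.Quotient.mk J qv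
      rw [hevK, evQT_qv, hζuv, hbackroot]
  have hBE' : ∀ y : LaurentTQ, backK (evK y) = Ideal.Quotient.mk J y :=
    fun y => DFunLike.congr_fun hBE y
  have hEB : ∀ z : Km m, evbar (backK z) = z := by
    intro z
    obtain ⟨P, rfl⟩ := AdjoinRoot.mk_surjective z
    rw [hbackK]; show evbar (aeval (Ideal.Quotient.mk J qv) P) = _
    have h1 : aeval (Ideal.Quotient.mk J qv) P
        = Ideal.Quotient.mkₐ ℚ J (aeval qv P) :=
      (Polynomial.aeval_algHom_apply (Ideal.Quotient.mkₐ ℚ J) qv P)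
    have h2 : evbar (Ideal.Quotient.mkₐ ℚ J (aeval qv P)) = evK (aeval qv P) := rfl
    rw [h1, h2]
    have h3 : evK (aeval qv P) = aeval (evK.toRatAlgHom qv) P :=
      (Polynomial.aeval_algHom_apply evK.toRatAlgHom qv P).symm
    have h4 : evK.toRatAlgHom qv = ζ := by
      show evK qv = ζ
      rw [hevK, evQT_qv, hζuv]
    rw [h3, h4, hζdef, aeval_def, Subsingleton.elim (algebraMap ℚ (Km m)) (AdjoinRoot.of _), ← AdjoinRoot.aeval_eq, aeval_def]
    exact congrArg (fun f => Polynomial.eval₂ f _ P) (Subsingleton.elim _ _)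
  set E : (LaurentTQ ⧸ J) ≃+* Km m :=
    { toFun := evbar
      invFun := backK
      left_inv := by
        intro x
        obtain ⟨y, rfl⟩ := Ideal.Quotient.mk_surjective x
        have : evbar (Ideal.Quotient.mk J y) = evK y := rfl
        rw [this, hBE' y]
      right_inv := hEB
      map_mul' := map_mul evbar
      map_add' := map_add evbar } with hE
  refine ⟨α, E, ?_, ?_⟩
  · have hordζu : orderOf ζu = m := by
      rw [← orderOf_units, hζuv, ← hζ.eq_orderOf]
    have hd : 0 < m / Nat.gcd m i := by
      have h1 := Nat.gcd_dvd_left m i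
      have h2 : 0 < Nat.gcd m i := Nat.gcd_pos_of_pos_left i hm
      exact Nat.div_pos (Nat.le_of_dvd hm h1) h2
    have hfin : IsOfFinOrder ζu := orderOf_pos_iff.mp (by omega)
    have hordpow : orderOf (ζu ^ (-(i : ℤ))) = m / Nat.gcd m i := by
      rw [zpow_neg, zpow_natCast, orderOf_inv, hfin.orderOf_pow, hordζu]
    rw [orderOf_units, hα, orderOf_neg_unit _ (by omega), hordpow]
  · intro p x
    obtain ⟨y, rfl⟩ := Ideal.Quotient.mk_surjective x
    rw [smul_mk]
    have hEapp : ∀ z, E z = evbar z := fun _ => rfl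
    rw [hEapp, hEapp]
    have h5 : ∀ w, evbar (Ideal.Quotient.mk J w) = evK w := fun w => rfl
    rw [h5, h5, map_mul, hevK, evQT_C]
    rfl

lemma Km_finrank (m : ℕ) (hm : 0 < m) :
    Module.finrank ℚ (Km m) = Nat.totient m := by
  rw [(AdjoinRoot.powerBasis (cyclotomic_ne_zero m ℚ)).finrank]
  show (cyclotomic m ℚ).natDegree = _
  rw [natDegree_cyclotomic]

lemma Km_finite (m : ℕ) (hm : 0 < m) : Module.Finite ℚ (Km m) :=
  (AdjoinRoot.powerBasis (cyclotomic_ne_zero m ℚ)).finite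

/-- torsion criterion -/
lemma tor_iff (m i : ℕ) (hm : 0 < m) (α : (Km m)ˣ) (E : (LaurentTQ ⧸ Jid m i) ≃+* Km m)
    (hord : orderOf ((α : (Km m)ˣ) : Km m) = negOrd (m / Nat.gcd m i))
    (hsmul : ∀ (p : Rt) (x : LaurentTQ ⧸ Jid m i), E (p • x) = evT α p * E x) (j : ℕ) :
    (∀ x : LaurentTQ ⧸ Jid m i, ((LaurentPolynomial.T (j:ℤ) - 1 : Rt)) • x = 0)
      ↔ negOrd (m / Nat.gcd m i) ∣ j := by
  rw [← hord]
  have hev : evT α (LaurentPolynomial.T (j:ℤ) - 1) = ((α : (Km m)ˣ) : Km m) ^ j - 1 := by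
    rw [map_sub, evT_T, map_one, zpow_natCast, Units.val_pow_eq_pow_val]
  constructor
  · intro h
    have h1 := h (E.symm 1)
    have h2 := hsmul (LaurentPolynomial.T (j:ℤ) - 1) (E.symm 1)
    rw [h1, map_zero, E.apply_symm_apply, mul_one, hev] at h2
    rw [orderOf_dvd_iff_pow_eq_one]
    linear_combination -h2
  · intro h x
    have hone : ((α : (Km m)ˣ) : Km m) ^ j = 1 := orderOf_dvd_iff_pow_eq_one.1 h
    have h2 := hsmul (LaurentPolynomial.T (j:ℤ) - 1) x
    rw [hev, hone, sub_self, zero_mul] at h2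
    exact E.injective (by rw [h2, map_zero])

/-- the scalar action on `Km` factoring through `ℚ`. -/
lemma evT_algebraMap {S : Type*} [CommRing S] [Algebra ℚ S] (u : Sˣ) (c : ℚ) :
    evT u (algebraMap ℚ Rt c) = algebraMap ℚ S c :=
  RingHom.congr_fun (Subsingleton.elim ((evT u).comp (algebraMap ℚ Rt)) (algebraMap ℚ S)) c

theorem stmt_15' (m m' i i' : ℕ) (hm : 1 < m) (hm' : 1 < m') :
    Nonempty ((LaurentTQ ⧸ Jid m i) ≃ₗ[Rt] (LaurentTQ ⧸ Jid m' i'))  ↔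
      (Nat.totient m = Nat.totient m' ∧ m / Nat.gcd m i = m' / Nat.gcd m' i') := by
  have hm0 : 0 < m := by omega
  have hm0' : 0 < m' := by omega
  obtain ⟨α, E, hord, hsmul⟩ := qtMain m i hm0
  obtain ⟨α', E', hord', hsmul'⟩ := qtMain m' i' hm0'
  have hd : 0 < m / Nat.gcd m i :=
    Nat.div_pos (Nat.le_of_dvd hm0 (Nat.gcd_dvd_left m i)) (Nat.gcd_pos_of_pos_left i hm0)
  have hd' : 0 < m' / Nat.gcd m' i' :=
    Nat.div_pos (Nat.le_of_dvd hm0' (Nat.gcd_dvd_left m' i')) (Nat.gcd_pos_of_pos_left i' hm0')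
  have hEsymm : ∀ (p : Rt) (y : Km m), E.symm (evT α p * y) = p • E.symm y := by
    intro p y
    apply E.injective
    rw [hsmul, E.apply_symm_apply, E.apply_symm_apply]
  have hEsymm' : ∀ (p : Rt) (y : Km m'), E'.symm (evT α' p * y) = p • E'.symm y := by
    intro p y
    apply E'.injective
    rw [hsmul', E'.apply_symm_apply, E'.apply_symm_apply]
  constructor
  · rintro ⟨e⟩
    constructor
    · -- totient equality via ℚ-dimension
      haveI := Km_finite m hm0
      haveI := Km_finite m' hm0'
      have g : Km m ≃ₗ[ℚ] Km m' :=
        { toFun := fun z => E' (e (E.symm z))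
          invFun := fun z => E (e.symm (E'.symm z))
          left_inv := fun z => by simp
          right_inv := fun z => by simp
          map_add' := fun a b => by simp
          map_smul' := fun c z => by
            show E' (e (E.symm (c • z))) = c • E' (e (E.symm z))
            rw [Algebra.smul_def (A := Km m), ← evT_algebraMap α, hEsymm, map_smul,
              hsmul', evT_algebraMap α', ← Algebra.smul_def (A := Km m')] }
      rw [← Km_finrank m hm0, ← Km_finrank m' hm0', g.finrank_eq]
    · -- order equality
      have hiff : ∀ j : ℕ, negOrd (m / Nat.gcd m i) ∣ j ↔ negOrd (m' / Nat.gcd m' i') ∣ j := by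
        intro j
        rw [← tor_iff m i hm0 α E hord hsmul j, ← tor_iff m' i' hm0' α' E' hord' hsmul' j]
        constructor
        · intro h x
          have h2 := congrArg e (h (e.symm x))
          rw [map_smul, e.apply_symm_apply, map_zero] at h2
          exact h2
        · intro h x
          have h2 := congrArg e.symm (h (e x))
          rw [map_smul, e.symm_apply_apply, map_zero] at h2
          exact h2
      have hnn : negOrd (m / Nat.gcd m i) = negOrd (m' / Nat.gcd m' i') :=
        Nat.dvd_antisymm ((hiff _).mpr dvd_rfl) ((hiff _).mp dvd_rfl)
      exact negOrd_inj hd hd' hnn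
  · rintro ⟨htot, hdd⟩
    haveI : Fact (Irreducible (cyclotomic m ℚ)) := ⟨cyclotomic.irreducible_rat hm0⟩
    haveI : Fact (Irreducible (cyclotomic m' ℚ)) := ⟨cyclotomic.irreducible_rat hm0'⟩
    set n : ℕ := negOrd (m / Nat.gcd m i) with hn
    have hn0 : 0 < n := negOrd_pos hd
    haveI : Fact (Irreducible (cyclotomic n ℚ)) := ⟨cyclotomic.irreducible_rat hn0⟩
    set ρ : Km n := AdjoinRoot.root _ with hρ
    have hρpow : ρ ^ n = 1 := by
      obtain ⟨c, hc⟩ := cyclotomic.dvd_X_pow_sub_one n ℚ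
      have h1 : aeval ρ ((X : ℚ[X]) ^ n - 1) = 0 := by
        rw [hc, map_mul, hρ, aeval_def, Subsingleton.elim (algebraMap ℚ (Km n)) (AdjoinRoot.of _), AdjoinRoot.eval₂_root, zero_mul]
      have h2 : aeval ρ ((X : ℚ[X]) ^ n - 1) = ρ ^ n - 1 := by
        rw [map_sub, map_pow, aeval_X, map_one]
      rw [h2] at h1
      linear_combination h1
    have hρu : IsUnit ρ := IsUnit.of_pow_eq_one hρpow hn0.ne'
    set ρu : (Km n)ˣ := hρu.unit with hρu_def
    have hρuv : (ρu : Km n) = ρ := rfl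
    have hprim : IsPrimitiveRoot ((α : (Km m)ˣ) : Km m) n := by
      rw [← hord]
      exact ⟨pow_orderOf_eq_one _, fun l hl => orderOf_dvd_iff_pow_eq_one.2 hl⟩
    have he2 : orderOf ((α' : (Km m')ˣ) : Km m') = n := by rw [hord', hn, hdd]
    have hprim' : IsPrimitiveRoot ((α' : (Km m')ˣ) : Km m') n := by
      rw [← he2]
      exact ⟨pow_orderOf_eq_one _, fun l hl => orderOf_dvd_iff_pow_eq_one.2 hl⟩
    have hcyc : aeval ((α : (Km m)ˣ) : Km m) (cyclotomic n ℚ) = 0 := by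
      have h0 := hprim.isRoot_cyclotomic hn0
      rwa [Polynomial.IsRoot.def, ← Polynomial.map_cyclotomic n (algebraMap ℚ (Km m)),
        Polynomial.eval_map, ← Polynomial.aeval_def] at h0
    have hcyc' : aeval ((α' : (Km m')ˣ) : Km m') (cyclotomic n ℚ) = 0 := by
      have h0 := hprim'.isRoot_cyclotomic hn0
      rwa [Polynomial.IsRoot.def, ← Polynomial.map_cyclotomic n (algebraMap ℚ (Km m')),
        Polynomial.eval_map, ← Polynomial.aeval_def] at h0
    set liftB : Km n →ₐ[ℚ] Km m := AdjoinRoot.liftAlgHom (cyclotomic n ℚ) (Algebra.ofId ℚ _) _ hcyc with hliftB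
    set liftB' : Km n →ₐ[ℚ] Km m' := AdjoinRoot.liftAlgHom (cyclotomic n ℚ) (Algebra.ofId ℚ _) _ hcyc' with hliftB'
    have hfac : ∀ p : Rt, evT α p = liftB (evT ρu p) := by
      intro p
      refine RingHom.congr_fun (ratHom_C_ext (evT α) (liftB.toRingHom.comp (evT ρu)) ?_) p
      rw [RingHom.comp_apply, evT_T, evT_T, zpow_one, zpow_one, hρuv, hρ, hliftB]
      exact (AdjoinRoot.liftAlgHom_root (x := ((α : (Km m)ˣ) : Km m)) (h := hcyc)).symm
    have hfac' : ∀ p : Rt, evT α' p = liftB' (evT ρu p) := by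
      intro p
      refine RingHom.congr_fun (ratHom_C_ext (evT α') (liftB'.toRingHom.comp (evT ρu)) ?_) p
      rw [RingHom.comp_apply, evT_T, evT_T, zpow_one, zpow_one, hρuv, hρ, hliftB']
      exact (AdjoinRoot.liftAlgHom_root (x := ((α' : (Km m')ˣ) : Km m')) (h := hcyc')).symm
    letI : Algebra (Km n) (Km m) := liftB.toRingHom.toAlgebra
    letI : Algebra (Km n) (Km m') := liftB'.toRingHom.toAlgebra
    haveI : IsScalarTower ℚ (Km n) (Km m) := IsScalarTower.of_algebraMap_eq'
      (Subsingleton.elim (algebraMap ℚ (Km m)) ((algebraMap (Km n) (Km m)).comp (algebraMap ℚ (Km n))))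
    haveI : IsScalarTower ℚ (Km n) (Km m') := IsScalarTower.of_algebraMap_eq'
      (Subsingleton.elim (algebraMap ℚ (Km m')) ((algebraMap (Km n) (Km m')).comp (algebraMap ℚ (Km n))))
    haveI := Km_finite m hm0
    haveI := Km_finite m' hm0'
    haveI : FiniteDimensional (Km n) (Km m) := FiniteDimensional.right ℚ _ _
    haveI : FiniteDimensional (Km n) (Km m') := FiniteDimensional.right ℚ _ _
    have hfr : Module.finrank (Km n) (Km m) = Module.finrank (Km n) (Km m') := by
      have h1 := Module.finrank_mul_finrank ℚ (Km n) (Km m)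
      have h2 := Module.finrank_mul_finrank ℚ (Km n) (Km m')
      rw [Km_finrank m hm0, Km_finrank n hn0] at h1
      rw [Km_finrank m' hm0', Km_finrank n hn0] at h2
      have hpos : 0 < Nat.totient n := Nat.totient_pos.mpr hn0
      refine Nat.eq_of_mul_eq_mul_left hpos ?_
      rw [h1, h2, htot]
    obtain ⟨G⟩ := FiniteDimensional.nonempty_linearEquiv_of_finrank_eq hfr
    have hsmG : ∀ (p : Rt) (y : Km m), G (evT α p * y) = evT α' p * G y := by
      intro p y
      have h1 : evT α p * y = (evT ρu p) • y := by
        rw [Algebra.smul_def, RingHom.algebraMap_toAlgebra, hfac]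
        rfl
      rw [h1, map_smul, Algebra.smul_def, RingHom.algebraMap_toAlgebra, hfac']
      rfl
    exact ⟨{
      toFun := fun x => E'.symm (G (E x))
      invFun := fun x => E.symm (G.symm (E' x))
      left_inv := fun x => by simp
      right_inv := fun x => by simp
      map_add' := fun a b => by simp
      map_smul' := fun p x => by
        show E'.symm (G (E (p • x))) = p • E'.symm (G (E x))
        rw [hsmul]; exact (congrArg E'.symm (hsmG p (E x))).trans (hEsymm' _ _) }⟩

end

/-- For `m, m' > 1`, the modules `{m}_i` and `{m'}_{i'}` are isomorphic as
`ℚ[t^{±1}]`-modules if and only if `φ(m) = φ(m')` (Euler totient) and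
`m / gcd(m,i) = m' / gcd(m',i')`. -/
theorem stmt_15 (m m' i i' : ℕ) (hm : 1 < m) (hm' : 1 < m') :
    Nonempty (qtMod m i ≃ₗ[LaurentPolynomial ℚ] qtMod m' i') ↔
      (Nat.totient m = Nat.totient m' ∧ m / Nat.gcd m i = m' / Nat.gcd m' i') := by
  exact stmt_15' m m' i i' hm hm'
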